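/- A real front profile B for the Ginzburg-Landau equation, i.e. a solution of B'' + cB' + B - B³ = 0 with B(-∞) = 1, B(+∞) = 0, satisfies for |c| ≥ 2 that B(ξ) ∈ (0,1) for all ξ ∈ ℝ, provided B is the heteroclinic orbit connecting (1,0) to (0,0) in the phase plane. -/

import Mathlib

open Set Filter

section GLFAux

open Real MeasureTheory intervalIntegral

lemma glf_bounded {f : ℝ → ℝ} (hf : Continuous f) {L1 L2 : ℝ}
    (h1 : Tendsto f atBot (nhds L1)) (h2 : Tendsto f atTop (nhds L2)) :
    ∃ M, 0 < M ∧ ∀ ξ, |f ξ| ≤ M := by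
  have e1 : ∀ᶠ ξ in atBot, |f ξ - L1| < 1 := by
    have := Metric.tendsto_nhds.1 h1 1 one_pos
    simpa [Real.dist_eq] using this
  have e2 : ∀ᶠ ξ in atTop, |f ξ - L2| < 1 := by
    have := Metric.tendsto_nhds.1 h2 1 one_pos
    simpa [Real.dist_eq] using this
  obtain ⟨a, ha⟩ := eventually_atBot.1 e1
  obtain ⟨b, hb⟩ := eventually_atTop.1 e2
  obtain ⟨C, hC⟩ := (isCompact_Icc (a := a) (b := b)).exists_bound_of_continuousOn hf.continuousOn
  refine ⟨max (max (|L1| + 1) (|L2| + 1)) C, ?_, fun ξ => ?_⟩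
  · calc (0:ℝ) < |L1| + 1 := by positivity
      _ ≤ _ := (le_max_left _ _).trans (le_max_left _ _)
  rcases le_or_gt ξ a with hxa | hxa
  · have := ha ξ hxa
    have : |f ξ| ≤ |L1| + 1 := by
      have := abs_sub_abs_le_abs_sub (f ξ) L1
      linarith
    exact this.trans ((le_max_left _ _).trans (le_max_left _ _))
  rcases le_or_gt ξ b with hxb | hxb
  · exact (hC ξ ⟨hxa.le, hxb⟩).trans (le_max_right _ _)
  · have := hb ξ hxb.le
    have : |f ξ| ≤ |L2| + 1 := by
      have := abs_sub_abs_le_abs_sub (f ξ) L2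
      linarith
    exact this.trans ((le_max_right _ _).trans (le_max_left _ _))

lemma glf_ftc {F F' : ℝ → ℝ} (hF : ∀ x, HasDerivAt F (F' x) x) (hcont : Continuous F')
    (a b : ℝ) : ∫ s in a..b, F' s = F b - F a :=
  integral_eq_sub_of_hasDerivAt (fun x _ => hF x) (hcont.intervalIntegrable a b)

lemma glf_exp_deriv (k : ℝ) (hk : k ≠ 0) (x : ℝ) :
    HasDerivAt (fun s => exp (k * s) / k) (exp (k * x)) x := by
  have := (((hasDerivAt_id x).const_mul k).exp).div_const k
  refine this.congr_deriv (Eq.symm ?_)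
  simp [hk]

lemma glf_integral_exp_mul {k : ℝ} (hk : k ≠ 0) (a b : ℝ) :
    ∫ s in a..b, exp (k * s) = (exp (k * b) - exp (k * a)) / k := by
  have hc : Continuous fun s : ℝ => exp (k * s) :=
    continuous_exp.comp (continuous_const.mul continuous_id)
  rw [glf_ftc (glf_exp_deriv k hk) hc]
  ring

lemma glf_abs_integral_le {k Mh a b : ℝ} (hk : k ≠ 0) (hab : a ≤ b) {h : ℝ → ℝ}
    (hcont : Continuous h) (hbd : ∀ s ∈ Icc a b, |h s| ≤ Mh) :
    |∫ s in a..b, exp (k * s) * h s| ≤ Mh * ((exp (k * b) - exp (k * a)) / k) := by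
  have hce : Continuous fun s : ℝ => exp (k * s) :=
    continuous_exp.comp (continuous_const.mul continuous_id)
  calc |∫ s in a..b, exp (k * s) * h s| ≤ ∫ s in a..b, |exp (k * s) * h s| :=
        intervalIntegral.abs_integral_le_integral_abs hab
    _ ≤ ∫ s in a..b, exp (k * s) * Mh := by
        apply intervalIntegral.integral_mono_on hab
          ((hce.mul hcont).abs.intervalIntegrable a b)
          ((hce.mul continuous_const).intervalIntegrable a b)
        intro x hx
        show |exp (k * x) * h x| ≤ exp (k * x) * Mh
        rw [abs_mul, abs_of_pos (exp_pos _)]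
        exact mul_le_mul_of_nonneg_left (hbd x hx) (exp_pos _).le
    _ = Mh * ((exp (k * b) - exp (k * a)) / k) := by
        rw [intervalIntegral.integral_mul_const, glf_integral_exp_mul hk]
        ring

variable {c : ℝ} {B B' : ℝ → ℝ}

lemma glf_exp_mul_deriv (c : ℝ) (x : ℝ) :
    HasDerivAt (fun s : ℝ => exp (c * s)) (exp (c * x) * c) x := by
  have := ((hasDerivAt_id x).const_mul c).exp
  simpa using this

lemma glf_g_deriv (hB : ∀ ξ, HasDerivAt B (B' ξ) ξ)
    (hB' : ∀ ξ, HasDerivAt B' (-c * B' ξ - B ξ + (B ξ) ^ 3) ξ) (ξ : ℝ) :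
    HasDerivAt (fun t => exp (c * t) * B' t) (exp (c * ξ) * (B ξ ^ 3 - B ξ)) ξ := by
  have := (glf_exp_mul_deriv c ξ).mul (hB' ξ)
  refine this.congr_deriv (Eq.symm ?_)
  ring

lemma glf_contB (hB : ∀ ξ, HasDerivAt B (B' ξ) ξ) : Continuous B := by
  have : Differentiable ℝ B := fun ξ => (hB ξ).differentiableAt
  exact this.continuous

lemma glf_inv_identity (c ξ : ℝ) (x : ℝ) : exp (-(c * ξ)) * (exp (c * ξ) * x) = x := by
  rw [← mul_assoc, ← exp_add]; simp

lemma glf_deriv_tendsto_atTop (hc : 0 < c)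
    (hB : ∀ ξ, HasDerivAt B (B' ξ) ξ)
    (hB' : ∀ ξ, HasDerivAt B' (-c * B' ξ - B ξ + (B ξ) ^ 3) ξ)
    (hh : Tendsto (fun ξ => B ξ ^ 3 - B ξ) atTop (nhds 0)) :
    Tendsto B' atTop (nhds 0) := by
  have contB : Continuous B := glf_contB hB
  have contB' : Continuous B' := glf_contB (B' := fun ξ => -c * B' ξ - B ξ + (B ξ) ^ 3) hB'
  have conth : Continuous (fun ξ => B ξ ^ 3 - B ξ) := by continuity
  set g : ℝ → ℝ := fun t => exp (c * t) * B' t with hgdef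
  rw [NormedAddCommGroup.tendsto_nhds_zero]
  intro ε hε
  have hh' : ∀ᶠ s in atTop, |B s ^ 3 - B s| ≤ c * ε / 4 := by
    have := Metric.tendsto_nhds.1 hh (c * ε / 4) (by positivity)
    filter_upwards [this] with s hs
    rw [Real.dist_eq, sub_zero] at hs; exact hs.le
  obtain ⟨a, ha⟩ := eventually_atTop.1 hh'
  have key : ∀ ξ, a ≤ ξ → ‖B' ξ‖ ≤ exp (-(c * ξ)) * |g a| + ε / 4 := by
    intro ξ hξ
    have ftc1 : ∫ s in a..ξ, exp (c * s) * (B s ^ 3 - B s) = g ξ - g a :=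
      glf_ftc (glf_g_deriv hB hB')
        (by exact (continuous_exp.comp (continuous_const.mul continuous_id)).mul conth) a ξ
    have hbnd := glf_abs_integral_le (ne_of_gt hc) hξ conth (fun s hs => ha s hs.1)
    rw [ftc1] at hbnd
    have h2 : |g ξ - g a| ≤ ε / 4 * exp (c * ξ) := by
      have h3 : c * ε / 4 * ((exp (c * ξ) - exp (c * a)) / c) ≤ ε / 4 * exp (c * ξ) := by
        have he : c * ε / 4 * ((exp (c * ξ) - exp (c * a)) / c)
            = ε / 4 * (exp (c * ξ) - exp (c * a)) := by
          field_simp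
        rw [he]
        nlinarith [exp_pos (c * a)]
      linarith
    have hB'eq : B' ξ = exp (-(c * ξ)) * g ξ := (glf_inv_identity c ξ (B' ξ)).symm
    rw [Real.norm_eq_abs, hB'eq, abs_mul, abs_of_pos (exp_pos _)]
    have : |g ξ| ≤ |g a| + ε / 4 * exp (c * ξ) := by
      have := abs_sub_abs_le_abs_sub (g ξ) (g a)
      linarith
    calc exp (-(c * ξ)) * |g ξ| ≤ exp (-(c * ξ)) * (|g a| + ε / 4 * exp (c * ξ)) :=
          mul_le_mul_of_nonneg_left this (exp_pos _).le
      _ = exp (-(c * ξ)) * |g a| + ε / 4 * (exp (-(c * ξ)) * exp (c * ξ)) := by ring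
      _ = exp (-(c * ξ)) * |g a| + ε / 4 := by rw [← exp_add]; simp
  have hdecay : Tendsto (fun ξ => exp (-(c * ξ)) * |g a|) atTop (nhds 0) := by
    have h1 : Tendsto (fun ξ : ℝ => -(c * ξ)) atTop atBot := by
      have := (tendsto_id (α := ℝ) (x := atTop)).const_mul_atTop hc
      exact tendsto_neg_atTop_atBot.comp this
    simpa using (tendsto_exp_atBot.comp h1).mul_const |g a|
  have hev : ∀ᶠ ξ in atTop, exp (-(c * ξ)) * |g a| < ε / 2 :=
    hdecay.eventually (eventually_lt_nhds (by positivity))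
  filter_upwards [hev, eventually_ge_atTop a] with ξ h1 h2
  have := key ξ h2
  linarith

lemma glf_deriv_tendsto_atBot (hc : 0 < c) {M Mh : ℝ}
    (hB : ∀ ξ, HasDerivAt B (B' ξ) ξ)
    (hB' : ∀ ξ, HasDerivAt B' (-c * B' ξ - B ξ + (B ξ) ^ 3) ξ)
    (hBbd : ∀ ξ, |B ξ| ≤ M)
    (hh : Tendsto (fun ξ => B ξ ^ 3 - B ξ) atBot (nhds 0))
    (hhbd : ∀ s, |B s ^ 3 - B s| ≤ Mh) :
    Tendsto B' atBot (nhds 0) := by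
  have contB : Continuous B := glf_contB hB
  have contB' : Continuous B' := glf_contB hB'
  have conth : Continuous (fun ξ => B ξ ^ 3 - B ξ) := by continuity
  have contgw : Continuous (fun s : ℝ => exp (c * s)) :=
    continuous_exp.comp (continuous_const.mul continuous_id)
  have contgw' : Continuous (fun s : ℝ => exp (-c * s)) :=
    continuous_exp.comp (continuous_const.mul continuous_id)
  have hMh0 : 0 ≤ Mh := (abs_nonneg _).trans (hhbd 0)
  set g : ℝ → ℝ := fun t => exp (c * t) * B' t with hgdef
  have contg : Continuous g := contgw.mul contB'
  have hB'g : ∀ s, B' s = exp (-c * s) * g s := by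
    intro s
    rw [hgdef, show (-c) * s = -(c * s) by ring]
    exact (glf_inv_identity c s (B' s)).symm
  -- pairwise bound on g
  have pair : ∀ ξ ξ', ξ ≤ ξ' → |g ξ' - g ξ| ≤ Mh / c * exp (c * ξ') := by
    intro ξ ξ' hle
    have ftc1 : ∫ s in ξ..ξ', exp (c * s) * (B s ^ 3 - B s) = g ξ' - g ξ :=
      glf_ftc (glf_g_deriv hB hB') (contgw.mul conth) ξ ξ'
    have hbnd := glf_abs_integral_le (ne_of_gt hc) hle conth (fun s _ => hhbd s)
    rw [ftc1] at hbnd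
    have h2 : Mh * ((exp (c * ξ') - exp (c * ξ)) / c) ≤ Mh / c * exp (c * ξ') := by
      rw [show Mh * ((exp (c * ξ') - exp (c * ξ)) / c)
            = Mh * (exp (c * ξ') - exp (c * ξ)) / c by ring,
          show Mh / c * exp (c * ξ') = Mh * exp (c * ξ') / c by ring]
      have : Mh * (exp (c * ξ') - exp (c * ξ)) ≤ Mh * exp (c * ξ') := by
        nlinarith [exp_pos (c * ξ)]
      gcongr
    linarith
  -- existence of a limit of g at -∞
  set r : ℝ := exp (-c) with hrdef
  have hr0 : 0 ≤ r := (exp_pos _).le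
  have hr1 : r < 1 := exp_lt_one_iff.2 (by linarith)
  set u : ℕ → ℝ := fun n => g (-(n : ℝ)) with hudef
  have hexpr : ∀ n : ℕ, exp (c * -(n : ℝ)) = r ^ n := by
    intro n
    rw [hrdef, ← exp_nat_mul, show (n : ℝ) * (-c) = c * -(n : ℝ) by ring]
  have hcauchy : CauchySeq u := by
    apply cauchySeq_of_le_geometric r (Mh / c) hr1
    intro n
    rw [Real.dist_eq, hudef]
    have := pair (-(n + 1 : ℕ) : ℝ) (-(n : ℝ)) (by push_cast; linarith)
    rw [hexpr] at this
    calc |g (-(n : ℝ)) - g (-((n + 1 : ℕ) : ℝ))| = |g (-(n : ℝ)) - g (-((n+1 : ℕ) : ℝ))| := rfl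
      _ ≤ Mh / c * r ^ n := by rw [abs_sub_comm] at this ⊢; exact this
  obtain ⟨A, hA⟩ := cauchySeq_tendsto_of_complete hcauchy
  have gtend : Tendsto g atBot (nhds A) := by
    rw [Metric.tendsto_nhds]
    intro ε hε
    have hrn : Tendsto (fun n : ℕ => Mh / c * r ^ n) atTop (nhds 0) := by
      simpa using (tendsto_pow_atTop_nhds_zero_of_lt_one hr0 hr1).const_mul (Mh / c)
    have h1 : ∀ᶠ n : ℕ in atTop, Mh / c * r ^ n < ε / 2 :=
      hrn.eventually (eventually_lt_nhds (by positivity))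
    have h2 : ∀ᶠ n : ℕ in atTop, dist (u n) A < ε / 2 :=
      hA.eventually (Metric.ball_mem_nhds A (by positivity))
    obtain ⟨n, hn1, hn2⟩ := (h1.and h2).exists
    refine eventually_atBot.2 ⟨-(n : ℝ), fun ξ hξ => ?_⟩
    have hp := pair ξ (-(n : ℝ)) hξ
    rw [hexpr] at hp
    calc dist (g ξ) A ≤ dist (g ξ) (u n) + dist (u n) A := dist_triangle _ _ _
      _ < ε / 2 + ε / 2 := by
          apply add_lt_add_of_le_of_lt ?_ hn2
          rw [Real.dist_eq, abs_sub_comm]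
          exact le_of_lt (hp.trans_lt hn1)
      _ = ε := by ring
  -- the limit must be zero
  have hA0 : A = 0 := by
    by_contra hA0
    have habs : 0 < |A| := abs_pos.2 hA0
    obtain ⟨ξb, hξb⟩ : ∃ ξb, ∀ ξ ≤ ξb, |g ξ - A| ≤ |A| / 2 := by
      have := Metric.tendsto_nhds.1 gtend (|A| / 2) (by positivity)
      obtain ⟨ξb, hb⟩ := eventually_atBot.1 this
      exact ⟨ξb, fun ξ hξ => by
        have := hb ξ hξ; rw [Real.dist_eq] at this; exact this.le⟩
    have key2 : ∀ ξ ≤ ξb, |A| / 2 * ((exp (-c * ξ) - exp (-c * ξb)) / c) ≤ 2 * M := by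
      intro ξ hξ
      have ftcB : ∫ s in ξ..ξb, B' s = B ξb - B ξ := glf_ftc hB contB' ξ ξb
      have hsplit : ∫ s in ξ..ξb, B' s
          = (∫ s in ξ..ξb, exp (-c * s) * A) + ∫ s in ξ..ξb, exp (-c * s) * (g s - A) := by
        rw [← intervalIntegral.integral_add (by exact (contgw'.mul continuous_const).intervalIntegrable _ _ : IntervalIntegrable (fun s => exp (-c * s) * A) volume ξ ξb)
          (by exact (contgw'.mul (contg.sub continuous_const)).intervalIntegrable _ _ : IntervalIntegrable (fun s => exp (-c * s) * (g s - A)) volume ξ ξb)]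
        apply intervalIntegral.integral_congr
        intro s _
        rw [hB'g s]; ring
      have hconst : ∫ s in ξ..ξb, exp (-c * s) * A
          = A * ((exp (-c * ξ) - exp (-c * ξb)) / c) := by
        rw [intervalIntegral.integral_mul_const, glf_integral_exp_mul (by linarith : (-c) ≠ 0)]
        ring
      have herr : |∫ s in ξ..ξb, exp (-c * s) * (g s - A)|
          ≤ |A| / 2 * ((exp (-c * ξ) - exp (-c * ξb)) / c) := by
        have := glf_abs_integral_le (k := -c) (by linarith : (-c) ≠ 0) hξ
          (contg.sub continuous_const) (fun s hs => hξb s hs.2)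
        calc |∫ s in ξ..ξb, exp (-c * s) * (g s - A)|
            ≤ |A| / 2 * ((exp (-c * ξb) - exp (-c * ξ)) / (-c)) := this
          _ = |A| / 2 * ((exp (-c * ξ) - exp (-c * ξb)) / c) := by ring
      set J : ℝ := (exp (-c * ξ) - exp (-c * ξb)) / c with hJdef
      have hJ0 : 0 ≤ J := by
        have h0 : exp (-c * ξb) ≤ exp (-c * ξ) := exp_le_exp.2 (by nlinarith)
        rw [hJdef]
        apply div_nonneg (by linarith) hc.le
      have hBdiff : |B ξb - B ξ| ≤ 2 * M := by
        have h1 := hBbd ξb; have h2 := hBbd ξ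
        have := abs_sub (B ξb) (B ξ)
        calc |B ξb - B ξ| ≤ |B ξb| + |B ξ| := abs_sub _ _
          _ ≤ 2 * M := by linarith
      have hlow : |A| * J - |A| / 2 * J ≤ |B ξb - B ξ| := by
        have e1 : B ξb - B ξ = A * J + ∫ s in ξ..ξb, exp (-c * s) * (g s - A) := by
          rw [← ftcB, hsplit, hconst]
        have : |A * J| - |∫ s in ξ..ξb, exp (-c * s) * (g s - A)| ≤ |B ξb - B ξ| := by
          rw [e1]
          have := abs_add_le (A * J + ∫ s in ξ..ξb, exp (-c * s) * (g s - A))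
            (-(∫ s in ξ..ξb, exp (-c * s) * (g s - A)))
          simp only [add_neg_cancel_right, abs_neg] at this
          linarith
        rw [abs_mul, abs_of_nonneg hJ0] at this
        linarith
      linarith
    -- J blows up: contradiction
    have hJtop : Tendsto (fun ξ => |A| / 2 * ((exp (-c * ξ) - exp (-c * ξb)) / c)) atBot atTop := by
      have h1 : Tendsto (fun ξ : ℝ => -c * ξ) atBot atTop :=
        tendsto_const_mul_atTop_of_neg (by linarith) |>.2 tendsto_id
      have h2 : Tendsto (fun ξ : ℝ => exp (-c * ξ)) atBot atTop := tendsto_exp_atTop.comp h1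
      have h3 : Tendsto (fun ξ : ℝ => exp (-c * ξ) - exp (-c * ξb)) atBot atTop :=
        tendsto_atTop_add_const_right _ _ h2
      exact (h3.atTop_div_const hc).const_mul_atTop (by positivity)
    obtain ⟨ξ, hξ1, hξ2⟩ := ((hJtop.eventually_gt_atTop (2 * M)).and (eventually_le_atBot ξb)).exists
    exact absurd (key2 ξ hξ2) (not_le.2 hξ1)
  rw [hA0] at gtend
  -- conclude B' → 0
  rw [NormedAddCommGroup.tendsto_nhds_zero]
  intro ε hε
  have hh' : ∀ᶠ s in atBot, |B s ^ 3 - B s| ≤ c * ε / 4 := by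
    have := Metric.tendsto_nhds.1 hh (c * ε / 4) (by positivity)
    filter_upwards [this] with s hs
    rw [Real.dist_eq, sub_zero] at hs; exact hs.le
  obtain ⟨a₁, ha₁⟩ := eventually_atBot.1 hh'
  filter_upwards [eventually_le_atBot a₁] with ξ hξ
  -- choose ξ' ≤ ξ with |g ξ'| small
  have hev : ∀ᶠ ξ' in atBot, |g ξ'| < ε / 4 * exp (c * ξ) := by
    have := Metric.tendsto_nhds.1 gtend (ε / 4 * exp (c * ξ)) (by positivity)
    filter_upwards [this] with ξ' h
    rw [Real.dist_eq, sub_zero] at h; exact h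
  obtain ⟨ξ', hξ'1, hξ'2⟩ := (hev.and (eventually_le_atBot ξ)).exists
  -- bound |g ξ - g ξ'|
  have ftc1 : ∫ s in ξ'..ξ, exp (c * s) * (B s ^ 3 - B s) = g ξ - g ξ' :=
    glf_ftc (glf_g_deriv hB hB') (contgw.mul conth) ξ' ξ
  have hbnd := glf_abs_integral_le (ne_of_gt hc) hξ'2 conth
    (fun s hs => ha₁ s (hs.2.trans hξ))
  rw [ftc1] at hbnd
  have h2 : c * ε / 4 * ((exp (c * ξ) - exp (c * ξ')) / c) ≤ ε / 4 * exp (c * ξ) := by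
    have he : c * ε / 4 * ((exp (c * ξ) - exp (c * ξ')) / c)
        = ε / 4 * (exp (c * ξ) - exp (c * ξ')) := by field_simp
    rw [he]
    nlinarith [exp_pos (c * ξ')]
  have hgξ : |g ξ| ≤ ε / 2 * exp (c * ξ) := by
    have := abs_sub_abs_le_abs_sub (g ξ) (g ξ')
    have h3 : |g ξ - g ξ'| ≤ ε / 4 * exp (c * ξ) := by linarith
    linarith [hξ'1]
  rw [Real.norm_eq_abs, hB'g ξ, abs_mul, abs_of_pos (exp_pos _)]
  calc exp (-c * ξ) * |g ξ| ≤ exp (-c * ξ) * (ε / 2 * exp (c * ξ)) :=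
        mul_le_mul_of_nonneg_left hgξ (exp_pos _).le
    _ = ε / 2 * (exp (-c * ξ) * exp (c * ξ)) := by ring
    _ = ε / 2 := by rw [← exp_add]; simp
    _ < ε := by linarith

lemma glf_eq_one_forward {M : ℝ}
    (hB : ∀ ξ, HasDerivAt B (B' ξ) ξ)
    (hB' : ∀ ξ, HasDerivAt B' (-c * B' ξ - B ξ + (B ξ) ^ 3) ξ)
    (hBbd : ∀ ξ, |B ξ| ≤ M) (hB'bd : ∀ ξ, |B' ξ| ≤ M)
    {a : ℝ} (ha1 : B a = 1) (ha2 : B' a = 0) :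
    ∀ ξ ≥ a, B ξ = 1 := by
  intro b hb
  set R : ℝ := max M 1 with hR
  have hR1 : (1 : ℝ) ≤ R := le_max_right _ _
  have hMR : M ≤ R := le_max_left _ _
  set v : ℝ → ℝ × ℝ → ℝ × ℝ := fun _ p => (p.2, -c * p.2 - p.1 + p.1 ^ 3) with hv
  set K : NNReal := ⟨|c| + 1 + 3 * R ^ 2, by positivity⟩ with hK
  have hKcoe : (K : ℝ) = |c| + 1 + 3 * R ^ 2 := rfl
  have hlip : ∀ t : ℝ, LipschitzOnWith K (v t) (Metric.closedBall (0 : ℝ × ℝ) R) := by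
    intro t
    rw [lipschitzOnWith_iff_dist_le_mul]
    intro p hp q hq
    have hp1 : |p.1| ≤ R := by
      have := mem_closedBall_zero_iff.1 hp
      rw [Prod.norm_def] at this
      exact le_trans (le_max_left _ _) this
    have hq1 : |q.1| ≤ R := by
      have := mem_closedBall_zero_iff.1 hq
      rw [Prod.norm_def] at this
      exact le_trans (le_max_left _ _) this
    have hd1 : dist p.1 q.1 ≤ dist p q := by rw [Prod.dist_eq]; exact le_max_left _ _
    have hd2 : dist p.2 q.2 ≤ dist p q := by rw [Prod.dist_eq]; exact le_max_right _ _
    have hdnn : 0 ≤ dist p q := dist_nonneg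
    have hcube : |p.1 ^ 3 - q.1 ^ 3| ≤ 3 * R ^ 2 * |p.1 - q.1| := by
      have he : p.1 ^ 3 - q.1 ^ 3 = (p.1 - q.1) * (p.1 ^ 2 + p.1 * q.1 + q.1 ^ 2) := by ring
      rw [he, abs_mul, mul_comm]
      apply mul_le_mul_of_nonneg_right ?_ (abs_nonneg _)
      have h1 := abs_le.1 hp1
      have h2 := abs_le.1 hq1
      apply abs_le.2
      constructor <;> nlinarith
    rw [Prod.dist_eq]
    apply max_le
    · calc dist (v t p).1 (v t q).1 = dist p.2 q.2 := rfl
        _ ≤ dist p q := hd2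
        _ ≤ K * dist p q := by
            rw [hKcoe]; nlinarith [abs_nonneg c, sq_nonneg R]
    · have he : (v t p).2 - (v t q).2
          = -c * (p.2 - q.2) + -(p.1 - q.1) + (p.1 ^ 3 - q.1 ^ 3) := by
        simp only [hv]; ring
      rw [Real.dist_eq, he]
      have t1 : |(-c) * (p.2 - q.2) + -(p.1 - q.1) + (p.1 ^ 3 - q.1 ^ 3)|
          ≤ |(-c) * (p.2 - q.2)| + |-(p.1 - q.1)| + |p.1 ^ 3 - q.1 ^ 3| := by
        calc |(-c) * (p.2 - q.2) + -(p.1 - q.1) + (p.1 ^ 3 - q.1 ^ 3)|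
            ≤ |(-c) * (p.2 - q.2) + -(p.1 - q.1)| + |p.1 ^ 3 - q.1 ^ 3| := abs_add_le _ _
          _ ≤ |(-c) * (p.2 - q.2)| + |-(p.1 - q.1)| + |p.1 ^ 3 - q.1 ^ 3| := by
              linarith [abs_add_le ((-c) * (p.2 - q.2)) (-(p.1 - q.1))]
      have e2 : |(-c) * (p.2 - q.2)| = |c| * dist p.2 q.2 := by
        rw [abs_mul, abs_neg, Real.dist_eq]
      have e3 : |-(p.1 - q.1)| = dist p.1 q.1 := by rw [abs_neg, Real.dist_eq]
      have e4 : |p.1 - q.1| = dist p.1 q.1 := Real.dist_eq p.1 q.1 ▸ rfl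
      rw [e2, e3] at t1
      have habsc : 0 ≤ |c| := abs_nonneg c
      calc |(-c) * (p.2 - q.2) + -(p.1 - q.1) + (p.1 ^ 3 - q.1 ^ 3)|
          ≤ |c| * dist p.2 q.2 + dist p.1 q.1 + 3 * R ^ 2 * dist p.1 q.1 := by
            have := hcube
            rw [e4] at this
            linarith
        _ ≤ (|c| + 1 + 3 * R ^ 2) * dist p q := by nlinarith [sq_nonneg R]
        _ = K * dist p q := by rw [hKcoe]
  have contB : Continuous B := glf_contB hB
  have contB' : Continuous B' := glf_contB hB'
  have sol : EqOn (fun ξ => (B ξ, B' ξ)) (fun _ => ((1 : ℝ), (0 : ℝ))) (Icc a b) := by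
    apply ODE_solution_unique_of_mem_Icc_right (fun t _ => hlip t)
    · exact (contB.prodMk contB').continuousOn
    · intro t _
      have := ((hB t).prodMk (hB' t)).hasDerivWithinAt (s := Ici t)
      simpa [hv] using this
    · intro t _
      rw [Metric.mem_closedBall, Prod.dist_eq]
      apply max_le
      · simpa [Real.dist_eq] using (hBbd t).trans hMR
      · simpa [Real.dist_eq] using (hB'bd t).trans hMR
    · exact continuousOn_const
    · intro t _
      have : HasDerivWithinAt (fun _ : ℝ => ((1 : ℝ), (0 : ℝ))) (0, 0) (Ici t) t :=
        (hasDerivAt_const t _).hasDerivWithinAt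
      refine this.congr_deriv (Eq.symm ?_)
      simp [hv]
    · intro t _
      rw [Metric.mem_closedBall, Prod.dist_eq]
      apply max_le
      · simpa [Real.dist_eq] using hR1
      · simp [Real.dist_eq]
        linarith
    · simp [ha1, ha2]
  have hpair := sol (⟨hb, le_rfl⟩ : b ∈ Icc a b)
  simpa using congrArg Prod.fst hpair

lemma glf_energy_deriv (hB : ∀ ξ, HasDerivAt B (B' ξ) ξ)
    (hB' : ∀ ξ, HasDerivAt B' (-c * B' ξ - B ξ + (B ξ) ^ 3) ξ) (ξ : ℝ) :
    HasDerivAt (fun t => B' t ^ 2 / 2 + B t ^ 2 / 2 - B t ^ 4 / 4) (-c * B' ξ ^ 2) ξ := by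
  have h := ((((hB' ξ).pow 2).div_const 2).add (((hB ξ).pow 2).div_const 2)).sub
    (((hB ξ).pow 4).div_const 4)
  refine h.congr_deriv (Eq.symm ?_)
  push_cast
  ring

lemma glf_hh_bd {M : ℝ} (hMbd : ∀ ξ, |B ξ| ≤ M) (s : ℝ) : |B s ^ 3 - B s| ≤ M ^ 3 + M := by
  have h1 := hMbd s
  have h2 : |B s ^ 3| = |B s| ^ 3 := by rw [abs_pow]
  have h3 := abs_nonneg (B s)
  calc |B s ^ 3 - B s| ≤ |B s ^ 3| + |B s| := abs_sub _ _
    _ ≤ M ^ 3 + M := by rw [h2]; nlinarith [pow_le_pow_left₀ h3 h1 3]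

lemma glf_main_pos (hc : 2 ≤ c)
    (hB : ∀ ξ, HasDerivAt B (B' ξ) ξ)
    (hB' : ∀ ξ, HasDerivAt B' (-c * B' ξ - B ξ + (B ξ) ^ 3) ξ)
    (hminus : Tendsto B atBot (nhds 1)) (hplus : Tendsto B atTop (nhds 0)) :
    ∀ ξ, B ξ ∈ Ioo (0 : ℝ) 1 := by
  have hc0 : 0 < c := by linarith
  have contB : Continuous B := glf_contB hB
  have contB' : Continuous B' := glf_contB hB'
  have hhbot : Tendsto (fun ξ => B ξ ^ 3 - B ξ) atBot (nhds 0) := by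
    have := (hminus.pow 3).sub hminus
    norm_num at this
    exact this
  have hhtop : Tendsto (fun ξ => B ξ ^ 3 - B ξ) atTop (nhds 0) := by
    have := (hplus.pow 3).sub hplus
    norm_num at this
    exact this
  obtain ⟨M, hM0, hMbd⟩ := glf_bounded contB hminus hplus
  have hB'bot : Tendsto B' atBot (nhds 0) :=
    glf_deriv_tendsto_atBot hc0 hB hB' hMbd hhbot (glf_hh_bd hMbd)
  have hB'top : Tendsto B' atTop (nhds 0) := glf_deriv_tendsto_atTop hc0 hB hB' hhtop
  obtain ⟨M', hM'0, hM'bd⟩ := glf_bounded contB' hB'bot hB'top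
  -- energy function
  set V : ℝ → ℝ := fun t => B' t ^ 2 / 2 + B t ^ 2 / 2 - B t ^ 4 / 4 with hVdef
  have hVd : ∀ ξ, HasDerivAt V (-c * B' ξ ^ 2) ξ := glf_energy_deriv hB hB'
  have hVanti : Antitone V := by
    apply antitone_of_deriv_nonpos
    · intro ξ; exact (hVd ξ).differentiableAt
    · intro ξ; rw [(hVd ξ).deriv]; nlinarith [sq_nonneg (B' ξ)]
  have hVbot : Tendsto V atBot (nhds (1 / 4)) := by
    have := (((hB'bot.pow 2).div_const 2).add ((hminus.pow 2).div_const 2)).sub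
      ((hminus.pow 4).div_const 4)
    norm_num at this
    exact this
  have hVle : ∀ ξ, V ξ ≤ 1 / 4 := by
    intro ξ
    apply ge_of_tendsto hVbot
    filter_upwards [eventually_le_atBot ξ] with ζ hζ
    exact hVanti hζ
  -- B < 1 everywhere
  have hlt1 : ∀ ξ, B ξ < 1 := by
    by_contra hcon
    push_neg at hcon
    obtain ⟨ξ₂, hξ₂⟩ := hcon
    have hev : ∀ᶠ ξ in atTop, B ξ < 1 := hplus.eventually (eventually_lt_nhds one_pos)
    obtain ⟨ξR, hξR1, hξR2⟩ := (hev.and (eventually_ge_atTop ξ₂)).exists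
    have h1mem : (1 : ℝ) ∈ Icc (B ξR) (B ξ₂) := ⟨hξR1.le, hξ₂⟩
    obtain ⟨ξ₃, _, hξ₃⟩ := intermediate_value_Icc' hξR2 contB.continuousOn h1mem
    have hVξ₃ := hVle ξ₃
    have hsq : B' ξ₃ ^ 2 ≤ 0 := by
      have : V ξ₃ = B' ξ₃ ^ 2 / 2 + B ξ₃ ^ 2 / 2 - B ξ₃ ^ 4 / 4 := rfl
      rw [this, hξ₃] at hVξ₃
      nlinarith
    have hB'ξ₃ : B' ξ₃ = 0 := by nlinarith [sq_nonneg (B' ξ₃)]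
    have heq1 := glf_eq_one_forward hB hB'
      (fun ξ => (hMbd ξ).trans (le_max_left M M'))
      (fun ξ => (hM'bd ξ).trans (le_max_right M M')) hξ₃ hB'ξ₃
    have hlim1 : Tendsto B atTop (nhds 1) := by
      apply Tendsto.congr' _ (tendsto_const_nhds (α := ℝ))
      filter_upwards [eventually_ge_atTop ξ₃] with ξ hξ
      exact (heq1 ξ hξ).symm
    have := tendsto_nhds_unique hlim1 hplus
    norm_num at this
  -- B > 0 everywhere
  have hgt0 : ∀ ξ, 0 < B ξ := by
    by_contra hcon
    push_neg at hcon
    obtain ⟨ξz, hξz⟩ := hcon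
    have hd : 0 ≤ c ^ 2 - 4 := by nlinarith
    have hs0 : 0 ≤ Real.sqrt (c ^ 2 - 4) := Real.sqrt_nonneg _
    have hs2 : Real.sqrt (c ^ 2 - 4) ^ 2 = c ^ 2 - 4 := Real.sq_sqrt hd
    have hsc : Real.sqrt (c ^ 2 - 4) < c := by nlinarith
    set μ₂ : ℝ := (c + Real.sqrt (c ^ 2 - 4)) / 2 with hμ₂def
    set μ₁ : ℝ := (c - Real.sqrt (c ^ 2 - 4)) / 2 with hμ₁def
    have hμ₁0 : 0 < μ₁ := by rw [hμ₁def]; linarith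
    have hμ₂0 : 0 < μ₂ := by rw [hμ₂def]; linarith
    have hμμ : μ₁ * μ₂ = 1 := by
      rw [hμ₁def, hμ₂def]
      have : (c - Real.sqrt (c ^ 2 - 4)) / 2 * ((c + Real.sqrt (c ^ 2 - 4)) / 2)
          = (c ^ 2 - Real.sqrt (c ^ 2 - 4) ^ 2) / 4 := by ring
      rw [this, hs2]
      ring
    have hsum : μ₁ + μ₂ = c := by rw [hμ₁def, hμ₂def]; ring
    -- the first zero of B
    have hevhalf : ∀ᶠ ξ in atBot, 1 / 2 < B ξ := hminus.eventually (eventually_gt_nhds (by norm_num))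
    obtain ⟨aL, haL⟩ := eventually_atBot.1 hevhalf
    set S : Set ℝ := {ξ | B ξ ≤ 0} with hSdef
    have hSne : S.Nonempty := ⟨ξz, hξz⟩
    have hSclosed : IsClosed S := isClosed_le contB continuous_const
    have hSbdd : BddBelow S := by
      refine ⟨aL, fun x hx => ?_⟩
      by_contra hax
      push_neg at hax
      have := haL x hax.le
      have hx' : B x ≤ 0 := hx
      linarith
    set ξ₀ : ℝ := sInf S with hξ₀def
    have hξ₀S : ξ₀ ∈ S := hSclosed.csInf_mem hSne hSbdd
    have hpos : ∀ ξ < ξ₀, 0 < B ξ := by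
      intro ξ hξ
      by_contra h
      push_neg at h
      exact absurd (csInf_le hSbdd (h : ξ ∈ S)) (not_le.2 hξ)
    have hB0 : B ξ₀ = 0 := by
      refine le_antisymm hξ₀S ?_
      have hcw : Tendsto B (nhdsWithin ξ₀ (Iio ξ₀)) (nhds (B ξ₀)) :=
        (contB.continuousAt (x := ξ₀)).continuousWithinAt
      apply ge_of_tendsto hcw
      filter_upwards [self_mem_nhdsWithin] with ζ hζ
      exact (hpos ζ hζ).le
    have hB'0 : B' ξ₀ ≤ 0 := by
      have hslope := hasDerivAt_iff_tendsto_slope.1 (hB ξ₀)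
      have hsub : nhdsWithin ξ₀ (Iio ξ₀) ≤ nhdsWithin ξ₀ {ξ₀}ᶜ :=
        nhdsWithin_mono _ (fun x hx => ne_of_lt hx)
      apply le_of_tendsto (hslope.mono_left hsub)
      filter_upwards [self_mem_nhdsWithin] with ζ (hζ : ζ < ξ₀)
      rw [slope_def_field, hB0]
      rw [show B ζ - 0 = B ζ by ring]
      exact div_nonpos_of_nonneg_of_nonpos (hpos ζ hζ).le (by linarith)
    -- the auxiliary function w = B' + μ₂ B
    set w : ℝ → ℝ := fun ξ => B' ξ + μ₂ * B ξ with hwdef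
    have hwtend : Tendsto w atBot (nhds μ₂) := by
      have := hB'bot.add (hminus.const_mul μ₂)
      norm_num at this
      exact this
    have hev2 : ∀ᶠ ξ in atBot, μ₂ / 2 < w ξ :=
      hwtend.eventually (eventually_gt_nhds (by linarith))
    obtain ⟨ξa, hξa1, hξa2⟩ := (hev2.and (eventually_lt_atBot ξ₀)).exists
    have hPd : ∀ ξ, HasDerivAt (fun t => exp (μ₁ * t) * w t) (exp (μ₁ * ξ) * B ξ ^ 3) ξ := by
      intro ξ
      have h1 : HasDerivAt w ((-c * B' ξ - B ξ + B ξ ^ 3) + μ₂ * B' ξ) ξ :=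
        (hB' ξ).add ((hB ξ).const_mul μ₂)
      have h2 := (glf_exp_mul_deriv μ₁ ξ).mul h1
      refine h2.congr_deriv (Eq.symm ?_)
      show exp (μ₁ * ξ) * B ξ ^ 3
          = exp (μ₁ * ξ) * μ₁ * (B' ξ + μ₂ * B ξ)
            + exp (μ₁ * ξ) * ((-c * B' ξ - B ξ + B ξ ^ 3) + μ₂ * B' ξ)
      linear_combination (- (exp (μ₁ * ξ) * B ξ)) * hμμ + (- (exp (μ₁ * ξ) * B' ξ)) * hsum
    have hint : ∫ t in ξa..ξ₀, exp (μ₁ * t) * B t ^ 3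
        = exp (μ₁ * ξ₀) * w ξ₀ - exp (μ₁ * ξa) * w ξa := by
      apply glf_ftc hPd
      exact (continuous_exp.comp (continuous_const.mul continuous_id)).mul ((contB.pow 3))
    have hnn : 0 ≤ ∫ t in ξa..ξ₀, exp (μ₁ * t) * B t ^ 3 := by
      apply intervalIntegral.integral_nonneg hξa2.le
      intro u hu
      have hBu : 0 ≤ B u := by
        rcases lt_or_eq_of_le hu.2 with h | h
        · exact (hpos u h).le
        · rw [h, hB0]
      positivity
    have hwa : 0 < w ξa := lt_trans (half_pos hμ₂0) hξa1
    have hwξ₀ : 0 < w ξ₀ := by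
      have h2 : 0 < exp (μ₁ * ξ₀) * w ξ₀ := by
        have := exp_pos (μ₁ * ξa)
        nlinarith
      nlinarith [exp_pos (μ₁ * ξ₀)]
    have hB'w : B' ξ₀ = w ξ₀ - μ₂ * B ξ₀ := by rw [hwdef]; ring
    rw [hB0] at hB'w
    simp at hB'w
    linarith
  exact fun ξ => ⟨hgt0 ξ, hlt1 ξ⟩

lemma glf_no_reverse (hc : 2 ≤ c)
    (hB : ∀ ξ, HasDerivAt B (B' ξ) ξ)
    (hB' : ∀ ξ, HasDerivAt B' (-c * B' ξ - B ξ + (B ξ) ^ 3) ξ)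
    (h0 : Tendsto B atBot (nhds 0)) (h1 : Tendsto B atTop (nhds 1)) : False := by
  have hc0 : 0 < c := by linarith
  have contB : Continuous B := glf_contB hB
  have contB' : Continuous B' := glf_contB hB'
  have hhbot : Tendsto (fun ξ => B ξ ^ 3 - B ξ) atBot (nhds 0) := by
    have := (h0.pow 3).sub h0
    norm_num at this
    exact this
  have hhtop : Tendsto (fun ξ => B ξ ^ 3 - B ξ) atTop (nhds 0) := by
    have := (h1.pow 3).sub h1
    norm_num at this
    exact this
  obtain ⟨M, hM0, hMbd⟩ := glf_bounded contB h0 h1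
  have hB'bot : Tendsto B' atBot (nhds 0) :=
    glf_deriv_tendsto_atBot hc0 hB hB' hMbd hhbot (glf_hh_bd hMbd)
  have hB'top : Tendsto B' atTop (nhds 0) := glf_deriv_tendsto_atTop hc0 hB hB' hhtop
  set V : ℝ → ℝ := fun t => B' t ^ 2 / 2 + B t ^ 2 / 2 - B t ^ 4 / 4 with hVdef
  have hVd : ∀ ξ, HasDerivAt V (-c * B' ξ ^ 2) ξ := glf_energy_deriv hB hB'
  have hVanti : Antitone V := by
    apply antitone_of_deriv_nonpos
    · intro ξ; exact (hVd ξ).differentiableAt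
    · intro ξ; rw [(hVd ξ).deriv]; nlinarith [sq_nonneg (B' ξ)]
  have hVbot : Tendsto V atBot (nhds 0) := by
    have := (((hB'bot.pow 2).div_const 2).add ((h0.pow 2).div_const 2)).sub
      ((h0.pow 4).div_const 4)
    norm_num at this
    exact this
  have hVtop : Tendsto V atTop (nhds (1 / 4)) := by
    have := (((hB'top.pow 2).div_const 2).add ((h1.pow 2).div_const 2)).sub
      ((h1.pow 4).div_const 4)
    norm_num at this
    exact this
  have hle : V 0 ≤ 0 := by
    apply ge_of_tendsto hVbot
    filter_upwards [eventually_le_atBot (0 : ℝ)] with ζ hζ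
    exact hVanti hζ
  have hge : 1 / 4 ≤ V 0 := by
    apply le_of_tendsto hVtop
    filter_upwards [eventually_ge_atTop (0 : ℝ)] with ζ hζ
    exact hVanti hζ
  have : (1:ℝ)/4 ≤ 0 := hge.trans hle
  norm_num at this

end GLFAux

/-- A real Ginzburg-Landau front: a solution of `B'' + cB' + B - B³ = 0` with
`B(-∞) = 1`, `B(+∞) = 0` satisfies, for `|c| ≥ 2`, `B(ξ) ∈ (0,1)` for all `ξ`. -/
theorem ginzburg_landau_front_in_strip
    (c : ℝ) (hc : |c| ≥ 2) (B B' : ℝ → ℝ)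
    (hB : ∀ ξ, HasDerivAt B (B' ξ) ξ)
    (hB' : ∀ ξ, HasDerivAt B' (-c * B' ξ - B ξ + (B ξ) ^ 3) ξ)
    (hminus : Tendsto B atBot (nhds 1))
    (hplus : Tendsto B atTop (nhds 0)) :
    ∀ ξ, B ξ ∈ Ioo (0 : ℝ) 1 := by
  rcases le_abs.1 hc with h | h
  · exact glf_main_pos h hB hB' hminus hplus
  · exfalso
    set D : ℝ → ℝ := fun t => B (-t) with hD
    set D' : ℝ → ℝ := fun t => -B' (-t) with hD'
    have hDd : ∀ t, HasDerivAt D (D' t) t := by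
      intro t
      have := (hB (-t)).comp t (hasDerivAt_neg t)
      exact this.congr_deriv (by simp [hD'])
    have hDd' : ∀ t, HasDerivAt D' (-(-c) * D' t - D t + (D t) ^ 3) t := by
      intro t
      have := ((hB' (-t)).comp t (hasDerivAt_neg t)).neg
      refine this.congr_deriv (Eq.symm ?_)
      simp only [hD, hD']
      ring
    have hd0 : Tendsto D atBot (nhds 0) := hplus.comp tendsto_neg_atBot_atTop
    have hd1 : Tendsto D atTop (nhds 1) := hminus.comp tendsto_neg_atTop_atBot
    exact glf_no_reverse (by linarith) hDd hDd' hd0 hd1
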